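/- Let S_1, S_2 be algebraic subtori of (ℂ*)^n corresponding to primitive sublattices A, B ⊆ ℤ^n with (A ⊗ ℂ) ∩ (B ⊗ ℂ) = 0. Then the cardinality of S_1 ∩ S_2 equals the product d_1 · d_2 ⋯ d_b of the elementary divisors of the image of B in ℤ^n/A. -/

import Mathlib

open Complex

/-- The exponential `t ↦ e^{2πit}` as a unit of `ℂ`. -/
noncomputable def expu (t : ℂ) : ℂˣ :=
  Units.mk0 (Complex.exp (2 * Real.pi * Complex.I * t)) (Complex.exp_ne_zero _)

/-- The coordinatewise exponential `exp_L : ℂⁿ → (ℂ*)ⁿ` as a group homomorphism. -/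
noncomputable def expL (n : ℕ) : Multiplicative (Fin n → ℂ) →* (Fin n → ℂˣ) where
  toFun t i := expu (Multiplicative.toAdd t i)
  map_one' := by
    funext i
    apply Units.ext
    simp [expu]
  map_mul' a b := by
    funext i
    apply Units.ext
    simp [expu, mul_add, Complex.exp_add]

/-- Inclusion of the lattice `ℤⁿ` into `ℂⁿ`. -/
def zc {n : ℕ} (v : Fin n → ℤ) : Fin n → ℂ := fun i => (v i : ℂ)

/-- The complexification `A ⊗ ℂ` of a sublattice `A ⊆ ℤⁿ`, as the ℂ-span of `A` in `ℂⁿ`. -/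
noncomputable def VC {n : ℕ} (A : Submodule ℤ (Fin n → ℤ)) : Submodule ℂ (Fin n → ℂ) :=
  Submodule.span ℂ (zc '' (A : Set (Fin n → ℤ)))

/-- The subtorus `exp_L(V)` of `(ℂ*)ⁿ` associated to a ℂ-subspace `V ⊆ ℂⁿ`. -/
noncomputable def expT {n : ℕ} (V : Submodule ℂ (Fin n → ℂ)) : Subgroup (Fin n → ℂˣ) :=
  Subgroup.map (expL n) (AddSubgroup.toSubgroup V.toAddSubgroup)

/-- A sublattice `A ⊆ ℤⁿ` is primitive if `ℤⁿ/A` is torsion-free. -/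
def IsPrimitive {n : ℕ} (A : Submodule ℤ (Fin n → ℤ)) : Prop :=
  ∀ (m : ℤ) (x : Fin n → ℤ), m ≠ 0 → m • x ∈ A → x ∈ A

-- auxiliary
noncomputable def E (n : ℕ) (t : Fin n → ℂ) : Fin n → ℂˣ := expL n (Multiplicative.ofAdd t)

lemma E_add {n : ℕ} (s t : Fin n → ℂ) : E n (s + t) = E n s * E n t :=
  map_mul (expL n) (Multiplicative.ofAdd s) (Multiplicative.ofAdd t)

lemma two_pi_I_ne : (2 * (Real.pi : ℂ) * Complex.I) ≠ 0 := by
  simp [Real.pi_ne_zero, Complex.I_ne_zero, Complex.ofReal_ne_zero]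

lemma expu_eq_one_iff (x : ℂ) : expu x = 1 ↔ ∃ k : ℤ, x = k := by
  rw [Units.ext_iff]
  show Complex.exp _ = 1 ↔ _
  rw [Complex.exp_eq_one_iff]
  constructor
  · rintro ⟨k, hk⟩
    refine ⟨k, mul_left_cancel₀ two_pi_I_ne ?_⟩
    rw [hk]; ring
  · rintro ⟨k, rfl⟩
    exact ⟨k, by ring⟩

lemma E_eq_one_iff {n : ℕ} (t : Fin n → ℂ) : E n t = 1 ↔ ∃ m : Fin n → ℤ, t = zc m := by
  constructor
  · intro h
    have h' : ∀ i, ∃ k : ℤ, t i = k := by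
      intro i
      have : expu (t i) = 1 := congrFun h i
      exact (expu_eq_one_iff (t i)).1 this
    choose m hm using h'
    exact ⟨m, funext hm⟩
  · rintro ⟨m, rfl⟩
    funext i
    show expu ((m i : ℂ)) = 1
    exact (expu_eq_one_iff _).2 ⟨m i, rfl⟩

lemma mem_expT {n : ℕ} (V : Submodule ℂ (Fin n → ℂ)) (u : Fin n → ℂˣ) :
    u ∈ expT V ↔ ∃ t, t ∈ V ∧ E n t = u := by
  rw [expT, Subgroup.mem_map]
  constructor
  · rintro ⟨x, hx, rfl⟩; exact ⟨Multiplicative.toAdd x, hx, rfl⟩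
  · rintro ⟨t, ht, rfl⟩; exact ⟨Multiplicative.ofAdd t, ht, rfl⟩

lemma zc_add {n : ℕ} (x y : Fin n → ℤ) : zc (x + y) = zc x + zc y := by
  funext i; simp [zc]

lemma zc_smul {n : ℕ} (k : ℤ) (x : Fin n → ℤ) : zc (k • x) = (k : ℂ) • zc x := by
  funext i; simp [zc]

lemma zc_inj {n : ℕ} : Function.Injective (zc (n := n)) := by
  intro x y h
  funext i
  have := congrFun h i
  simpa [zc] using this

lemma zc_sum {n : ℕ} {ι : Type*} [Fintype ι] (c : ι → ℤ) (v : ι → Fin n → ℤ) :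
    zc (∑ i, c i • v i) = ∑ i, (c i : ℂ) • zc (v i) := by
  funext j
  simp [zc, Finset.sum_apply]

set_option maxHeartbeats 4000000 in
/-- Let `S₁, S₂ ⊆ (ℂ*)ⁿ` be the subtori corresponding to primitive sublattices
`A, B ⊆ ℤⁿ` with `(A⊗ℂ) ∩ (B⊗ℂ) = 0`. If `d₁ | ... | d_b` are the elementary divisors
of the image of `B` in `ℤⁿ/A` (Smith normal form data), then `|S₁ ∩ S₂| = d₁⋯d_b`. -/
theorem stmt_10 (n : ℕ) (A B : Submodule ℤ (Fin n → ℤ))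
    (hA : IsPrimitive A) (hB : IsPrimitive B)
    (hAB : VC A ⊓ VC B = ⊥)
    (b N : ℕ) (hbN : b ≤ N)
    (e' : Module.Basis (Fin N) ℤ ((Fin n → ℤ) ⧸ A))
    (d : Fin b → ℕ) (hd : ∀ j, 0 < d j)
    (hdiv : ∀ i j : Fin b, i ≤ j → d i ∣ d j)
    (gb' : Module.Basis (Fin b) ℤ (B.map A.mkQ))
    (hgb' : ∀ j, (gb' j : (Fin n → ℤ) ⧸ A) = (d j : ℤ) • e' (Fin.castLE hbN j)) :
    Nat.card (expT (VC A) ⊓ expT (VC B) : Subgroup (Fin n → ℂˣ)) = ∏ j, d j := by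
  classical
  haveI : ∀ j, NeZero (d j) := fun j => ⟨(hd j).ne'⟩
  have hdC : ∀ j, (d j : ℂ) ≠ 0 := fun j => Nat.cast_ne_zero.2 (hd j).ne'
  -- A ∩ B = 0
  have hAcapB : ∀ x, x ∈ A → x ∈ B → x = 0 := by
    intro x hxA hxB
    have hx : zc x ∈ VC A ⊓ VC B :=
      ⟨Submodule.subset_span ⟨x, hxA, rfl⟩, Submodule.subset_span ⟨x, hxB, rfl⟩⟩
    rw [hAB, Submodule.mem_bot] at hx
    have h0 : zc x = zc 0 := by rw [hx]; funext i; simp [zc]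
    exact zc_inj h0
  -- basis of A
  obtain ⟨r, a⟩ := Submodule.basisOfPid (Pi.basisFun ℤ (Fin n)) A
  -- lifts of e'
  choose f0 hf0 using fun j => Submodule.Quotient.mk_surjective A (e' j)
  set σ' : ((Fin n → ℤ) ⧸ A) →ₗ[ℤ] (Fin n → ℤ) := e'.constr ℤ f0 with hσ'def
  have hσ' : ∀ q, A.mkQ (σ' q) = q := by
    have hcomp : A.mkQ.comp σ' = LinearMap.id := by
      apply e'.ext; intro j
      simp [hσ'def, Module.Basis.constr_basis, Submodule.mkQ_apply, hf0]
    intro q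
    exact DFunLike.congr_fun hcomp q
  -- splitting iso
  set F : (A × ((Fin n → ℤ) ⧸ A)) →ₗ[ℤ] (Fin n → ℤ) := A.subtype.coprod σ' with hFdef
  have hGmem : ∀ x : Fin n → ℤ, x - σ' (A.mkQ x) ∈ A := by
    intro x
    rw [← Submodule.Quotient.mk_eq_zero A, ← Submodule.mkQ_apply, map_sub, hσ', sub_self]
  set G : (Fin n → ℤ) →ₗ[ℤ] (A × ((Fin n → ℤ) ⧸ A)) :=
    (LinearMap.codRestrict A (LinearMap.id - σ' ∘ₗ A.mkQ) hGmem).prod A.mkQ with hGdef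
  have hFG : F.comp G = LinearMap.id := by
    apply LinearMap.ext; intro x
    simp [hFdef, hGdef, LinearMap.coprod_apply, sub_add_cancel]
  have hGF : G.comp F = LinearMap.id := by
    apply LinearMap.ext; rintro ⟨y, q⟩
    have hy : A.mkQ (y : Fin n → ℤ) = 0 := (Submodule.Quotient.mk_eq_zero A).2 y.2
    refine Prod.ext (Subtype.ext ?_) ?_
    · simp [hFdef, hGdef, LinearMap.coprod_apply, map_add, hy, hσ']
    · simp [hFdef, hGdef, LinearMap.coprod_apply, map_add, hy, hσ']
  set iso : (A × ((Fin n → ℤ) ⧸ A)) ≃ₗ[ℤ] (Fin n → ℤ) := LinearEquiv.ofLinear F G hFG hGF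
    with hisodef
  set g : Module.Basis (Fin r ⊕ Fin N) ℤ (Fin n → ℤ) := (a.prod e').map iso with hgdef
  have hg1 : ∀ i, g (Sum.inl i) = (a i : Fin n → ℤ) := by
    intro i
    have h1 : (a.prod e') (Sum.inl i) = ((a i : A), (0 : (Fin n → ℤ) ⧸ A)) :=
      Prod.ext (Module.Basis.prod_apply_inl_fst _ _ _) (Module.Basis.prod_apply_inl_snd _ _ _)
    rw [hgdef, Module.Basis.map_apply, h1]
    simp [hisodef, hFdef, LinearMap.coprod_apply]
  have hg2 : ∀ j, g (Sum.inr j) = f0 j := by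
    intro j
    have h1 : (a.prod e') (Sum.inr j) = ((0 : A), e' j) :=
      Prod.ext (Module.Basis.prod_apply_inr_fst _ _ _) (Module.Basis.prod_apply_inr_snd _ _ _)
    rw [hgdef, Module.Basis.map_apply, h1]
    simp [hisodef, hFdef, LinearMap.coprod_apply, hσ'def, Module.Basis.constr_basis]
  have hcard : r + N = n := by
    have eqv := g.indexEquiv (Pi.basisFun ℤ (Fin n))
    simpa using Fintype.card_congr eqv
  -- complex basis
  have hspan : ⊤ ≤ Submodule.span ℂ (Set.range fun k => zc (g k)) := by
    have key : ∀ m : Fin n → ℤ, zc m ∈ Submodule.span ℂ (Set.range fun k => zc (g k)) := by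
      intro m
      have hm := g.sum_repr m
      rw [← hm, zc_sum]
      exact Submodule.sum_mem _ fun k _ =>
        Submodule.smul_mem _ _ (Submodule.subset_span ⟨k, rfl⟩)
    intro x _
    have hx : x = ∑ i, x i • zc (Pi.single i 1) := by
      funext j
      simp [zc, Finset.sum_apply, Pi.single_apply, apply_ite (Int.cast : ℤ → ℂ),
        mul_ite, mul_one, mul_zero]
    rw [hx]
    exact Submodule.sum_mem _ fun i _ => Submodule.smul_mem _ _ (key _)
  have hcardeq : Fintype.card (Fin r ⊕ Fin N) = Module.finrank ℂ (Fin n → ℂ) := by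
    simp [hcard, Module.finrank_pi]
  set cb : Module.Basis (Fin r ⊕ Fin N) ℂ (Fin n → ℂ) :=
    basisOfTopLeSpanOfCardEqFinrank (fun k => zc (g k)) hspan hcardeq with hcbdef
  have hcb : ∀ k, cb k = zc (g k) := by
    intro k
    rw [hcbdef, coe_basisOfTopLeSpanOfCardEqFinrank]
  have hrepr_int : ∀ (m : Fin n → ℤ) k, cb.repr (zc m) k = ((g.repr m k : ℤ) : ℂ) := by
    intro m k
    have h1 : zc m = ∑ k', ((g.repr m k' : ℤ) : ℂ) • cb k' := by
      conv_lhs => rw [← g.sum_repr m]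
      rw [zc_sum]
      exact Finset.sum_congr rfl fun k' _ => by rw [hcb]
    rw [h1]
    exact congrFun (cb.repr_sum_self _) k
  -- coordinates of elements of A
  have hAcoords : ∀ y, y ∈ A → ∃ c : Fin r → ℤ, y = ∑ i, c i • (a i : Fin n → ℤ) := by
    intro y hy
    refine ⟨fun i => a.repr ⟨y, hy⟩ i, ?_⟩
    have h1 := a.sum_repr ⟨y, hy⟩
    have h2 : y = ((∑ i, a.repr ⟨y, hy⟩ i • a i : A) : Fin n → ℤ) := by rw [h1]
    refine h2.trans ?_
    push_cast
    rfl
  have hreprA : ∀ y, y ∈ A → ∀ j, g.repr y (Sum.inr j) = 0 := by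
    intro y hy j
    obtain ⟨c, hc⟩ := hAcoords y hy
    have h1 : y = ∑ k, (Sum.elim c (fun _ => (0 : ℤ)) k) • g k := by
      rw [Fintype.sum_sum_type]
      simp only [Sum.elim_inl, Sum.elim_inr, zero_smul, Finset.sum_const_zero, add_zero]
      rw [hc]
      exact Finset.sum_congr rfl fun i _ => by rw [hg1]
    rw [h1, g.repr_sum_self]
    rfl
  -- basis of B lifted from gb'
  have hφmem : ∀ x ∈ B, A.mkQ x ∈ B.map A.mkQ := fun x hx => Submodule.mem_map_of_mem hx
  set φ : B →ₗ[ℤ] (B.map A.mkQ) := A.mkQ.restrict hφmem with hφdef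
  have hφbij : Function.Bijective φ := by
    constructor
    · intro x y hxy
      have h1 : A.mkQ (x : Fin n → ℤ) = A.mkQ (y : Fin n → ℤ) :=
        congrArg Subtype.val hxy
      have h2 : (x : Fin n → ℤ) - y ∈ A := (Submodule.Quotient.eq A).1 h1
      have h3 : (x : Fin n → ℤ) - y ∈ B := sub_mem x.2 y.2
      have h4 := hAcapB _ h2 h3
      exact Subtype.ext (sub_eq_zero.1 h4)
    · rintro ⟨z, hz⟩
      rw [Submodule.mem_map] at hz
      obtain ⟨x, hxB, hxz⟩ := hz
      exact ⟨⟨x, hxB⟩, Subtype.ext hxz⟩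
  set βB : Module.Basis (Fin b) ℤ B := gb'.map (LinearEquiv.ofBijective φ hφbij).symm with hβBdef
  set βv : Fin b → (Fin n → ℤ) := fun j => (βB j : Fin n → ℤ) with hβvdef
  have hβvB : ∀ j, βv j ∈ B := fun j => (βB j).2
  have hβmk : ∀ j, A.mkQ (βv j) = (d j : ℤ) • e' (Fin.castLE hbN j) := by
    intro j
    have h1 : φ (βB j) = gb' j := by
      rw [hβBdef, Module.Basis.map_apply]
      exact (LinearEquiv.ofBijective φ hφbij).apply_symm_apply (gb' j)
    have h2 := congrArg Subtype.val h1
    rw [← hgb' j]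
    exact h2
  have hBcoords : ∀ y, y ∈ B → ∃ c : Fin b → ℤ, y = ∑ j, c j • βv j := by
    intro y hy
    refine ⟨fun j => βB.repr ⟨y, hy⟩ j, ?_⟩
    have h1 := βB.sum_repr ⟨y, hy⟩
    have h2 : y = ((∑ j, βB.repr ⟨y, hy⟩ j • βB j : B) : Fin n → ℤ) := by rw [h1]
    refine h2.trans ?_
    push_cast
    rfl
  -- decomposition of βv
  set α : Fin b → (Fin n → ℤ) := fun j => βv j - (d j : ℤ) • f0 (Fin.castLE hbN j) with hαdef
  have hαA : ∀ j, α j ∈ A := by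
    intro j
    rw [← Submodule.Quotient.mk_eq_zero A, ← Submodule.mkQ_apply, hαdef]
    simp only [map_sub, map_smul, hβmk, Submodule.mkQ_apply, hf0]
    rw [sub_self]
  have hzcβ : ∀ j, zc (βv j) = (d j : ℂ) • zc (f0 (Fin.castLE hbN j)) + zc (α j) := by
    intro j
    have h1 : βv j = (d j : ℤ) • f0 (Fin.castLE hbN j) + α j := by
      rw [hαdef]; ring
    rw [h1, zc_add, zc_smul]
    push_cast
    rfl
  set J : Fin b → (Fin r ⊕ Fin N) := fun j => Sum.inr (Fin.castLE hbN j) with hJdef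
  have hJinj : Function.Injective J := by
    intro j j' h
    rw [hJdef] at h
    have h2 : Fin.castLE hbN j = Fin.castLE hbN j' := Sum.inr.inj h
    exact Fin.ext (by simpa using congrArg Fin.val h2)
  -- repr of zc (α j) vanishes on inr coordinates
  have hreprα : ∀ j j', cb.repr (zc (α j)) (Sum.inr j') = 0 := by
    intro j j'
    rw [hrepr_int, hreprA _ (hαA j) j']
    simp
  have hreprβ : ∀ j j', cb.repr (zc (βv j)) (J j') = if j = j' then (d j : ℂ) else 0 := by
    intro j j'
    rw [hzcβ, map_add, map_smul]
    have h1 : zc (f0 (Fin.castLE hbN j)) = cb (J j) := by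
      rw [hcb, hJdef, hg2]
    rw [Finsupp.add_apply, Finsupp.smul_apply, h1, cb.repr_self, hreprα]
    rw [Finsupp.single_apply]
    by_cases h : j = j'
    · subst h; simp
    · have : ¬ (J j = J j') := fun hc => h (hJinj hc)
      simp [this, h]
  -- coordinate extraction for combinations of zc βv
  have hcoordβ : ∀ (s : Fin b → ℂ) j, cb.repr (∑ j', s j' • zc (βv j')) (J j) = s j * d j := by
    intro s j
    rw [map_sum]
    rw [Finsupp.finset_sum_apply]
    have h1 : ∀ j', (cb.repr (s j' • zc (βv j'))) (J j) = s j' * (if j' = j then (d j' : ℂ) else 0) := by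
      intro j'
      rw [map_smul, Finsupp.smul_apply, hreprβ]
      simp
    rw [Finset.sum_congr rfl fun j' _ => h1 j']
    simp [Finset.sum_ite_eq', mul_ite]
  -- coordinates of VC A vanish on inr
  have hcoordA : ∀ x ∈ VC A, ∀ k, cb.repr x (Sum.inr k) = 0 := by
    intro x hx k
    have hle : VC A ≤ LinearMap.ker (cb.coord (Sum.inr k)) := by
      rw [VC, Submodule.span_le]
      rintro _ ⟨y, hy, rfl⟩
      rw [SetLike.mem_coe, LinearMap.mem_ker]
      show cb.repr (zc y) (Sum.inr k) = 0
      rw [hrepr_int, hreprA _ hy k]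
      simp
    have := hle hx
    rw [LinearMap.mem_ker] at this
    exact this
  -- linear independence of zc ∘ βv
  have hli : ∀ (s : Fin b → ℂ), ∑ j, s j • zc (βv j) = 0 → ∀ j, s j = 0 := by
    intro s hs j
    have h1 := hcoordβ s j
    rw [hs] at h1
    simp only [map_zero, Finsupp.coe_zero, Pi.zero_apply] at h1
    have := h1.symm
    rcases mul_eq_zero.1 this with h | h
    · exact h
    · exact absurd h (hdC j)
  -- the map w
  set te : (Fin b → ℤ) → (Fin n → ℂ) :=
    fun e => ∑ j, ((e j : ℂ) / (d j : ℂ)) • zc (βv j) with htedef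
  set w : (Fin b → ℤ) → (Fin n → ℂˣ) := fun e => E n (te e) with hwdef
  have hte_add : ∀ e e', te (e + e') = te e + te e' := by
    intro e e'
    simp only [htedef, Pi.add_apply]
    rw [← Finset.sum_add_distrib]
    refine Finset.sum_congr rfl fun j _ => ?_
    rw [← add_smul]
    congr 1
    push_cast
    ring
  have hw_add : ∀ e e', w (e + e') = w e * w e' := by
    intro e e'
    simp only [hwdef]
    rw [hte_add, E_add]
  have hteB : ∀ e, te e ∈ VC B := by
    intro e
    simp only [htedef]
    exact Submodule.sum_mem _ fun j _ =>
      Submodule.smul_mem _ _ (Submodule.subset_span ⟨βv j, hβvB j, rfl⟩)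
  have hwB : ∀ e, w e ∈ expT (VC B) := fun e => (mem_expT _ _).2 ⟨te e, hteB e, rfl⟩
  have hwA : ∀ e, w e ∈ expT (VC A) := by
    intro e
    have hsplit : te e = zc (∑ j, e j • f0 (Fin.castLE hbN j))
        + ∑ j, ((e j : ℂ) / (d j : ℂ)) • zc (α j) := by
      simp only [htedef]
      rw [zc_sum, ← Finset.sum_add_distrib]
      refine Finset.sum_congr rfl fun j _ => ?_
      rw [hzcβ j, smul_add, smul_smul, div_mul_cancel₀ _ (hdC j)]
    have hmem : (∑ j, ((e j : ℂ) / (d j : ℂ)) • zc (α j)) ∈ VC A :=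
      Submodule.sum_mem _ fun j _ =>
        Submodule.smul_mem _ _ (Submodule.subset_span ⟨α j, hαA j, rfl⟩)
    have h1 : w e = E n (∑ j, ((e j : ℂ) / (d j : ℂ)) • zc (α j)) := by
      simp only [hwdef]
      rw [hsplit, E_add, (E_eq_one_iff _).2 ⟨_, rfl⟩, one_mul]
    rw [h1]
    exact (mem_expT _ _).2 ⟨_, hmem, rfl⟩
  -- w e = 1 iff all d j ∣ e j
  have hW1 : ∀ e : Fin b → ℤ, (∀ j, (d j : ℤ) ∣ e j) → w e = 1 := by
    intro e he
    choose k hk using he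
    have h1 : te e = zc (∑ j, k j • βv j) := by
      simp only [htedef]
      rw [zc_sum]
      refine Finset.sum_congr rfl fun j _ => ?_
      congr 1
      rw [hk j]
      push_cast
      exact mul_div_cancel_left₀ _ (hdC j)
    have hwe : w e = E n (te e) := rfl
    rw [hwe, h1]
    exact (E_eq_one_iff _).2 ⟨_, rfl⟩
  have hDpos : 0 < ∏ j, d j := Finset.prod_pos fun j _ => hd j
  have hW2 : ∀ e : Fin b → ℤ, w e = 1 → ∀ j, (d j : ℤ) ∣ e j := by
    intro e he
    obtain ⟨m, hm⟩ := (E_eq_one_iff (te e)).1 he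
    have hDd : ∀ j, d j ∣ ∏ j', d j' := fun j => Finset.dvd_prod_of_mem d (Finset.mem_univ j)
    choose cof hcof using hDd
    have hDm : ((∏ j', d j' : ℕ) : ℤ) • m = ∑ j, ((cof j : ℤ) * e j) • βv j := by
      apply zc_inj
      rw [zc_smul, ← hm, zc_sum]
      simp only [htedef]
      rw [Finset.smul_sum]
      refine Finset.sum_congr rfl fun j _ => ?_
      rw [smul_smul]
      congr 1
      have hcofC : (((∏ j', d j' : ℕ) : ℤ) : ℂ) = (d j : ℂ) * (cof j : ℂ) := by
        exact_mod_cast congrArg (Nat.cast : ℕ → ℂ) (hcof j)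
      rw [hcofC]
      push_cast
      field_simp [hdC j]
    have hmB : m ∈ B := by
      refine hB ((∏ j', d j' : ℕ) : ℤ) m (by exact_mod_cast hDpos.ne') ?_
      rw [hDm]
      exact Submodule.sum_mem _ fun j _ => Submodule.smul_mem _ _ (hβvB j)
    obtain ⟨u, hu⟩ := hBcoords m hmB
    intro j
    have hzm : zc m = ∑ j', (u j' : ℂ) • zc (βv j') := by rw [hu, zc_sum]
    have h0 : ∑ j', ((e j' : ℂ) / (d j' : ℂ) - (u j' : ℂ)) • zc (βv j') = 0 := by
      have h1 : ∑ j', ((e j' : ℂ) / (d j' : ℂ) - (u j' : ℂ)) • zc (βv j')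
          = te e - zc m := by
        rw [hzm]
        simp only [htedef]
        rw [← Finset.sum_sub_distrib]
        exact Finset.sum_congr rfl fun j' _ => (sub_smul _ _ _)
      rw [h1, hm, sub_self]
    have hz := hli _ h0 j
    have h2 : (e j : ℂ) / (d j : ℂ) = (u j : ℂ) := sub_eq_zero.1 hz
    have heq : (e j : ℂ) = (u j : ℂ) * (d j : ℂ) := (div_eq_iff (hdC j)).1 h2
    have heqZ : e j = u j * (d j : ℤ) := by exact_mod_cast heq
    exact ⟨u j, by rw [heqZ, mul_comm]⟩
  -- ZMod cast helper
  have hzm_cast : ∀ (j : Fin b) (c : ZMod (d j)), (((c.val : ℤ)) : ZMod (d j)) = c := by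
    intro j c
    rw [Int.cast_natCast]
    exact ZMod.natCast_rightInverse c
  have hcancel : ∀ e e' : Fin b → ℤ, w e = w e' → w (e - e') = 1 := by
    intro e e' h
    have harg : e - e' + e' = e := by abel
    have h1 : w (e - e') * w e' = w e' := by
      rw [← hw_add, harg, h]
    exact mul_eq_right.1 h1
  -- the bijection
  set S : Subgroup (Fin n → ℂˣ) := expT (VC A) ⊓ expT (VC B) with hSdef
  set ψ : (∀ j, ZMod (d j)) → S :=
    fun c => ⟨w (fun j => ((c j).val : ℤ)), Subgroup.mem_inf.2 ⟨hwA _, hwB _⟩⟩ with hψdef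
  have hinj : Function.Injective ψ := by
    intro c c' h
    have h0 : w (fun j => ((c j).val : ℤ)) = w (fun j => ((c' j).val : ℤ)) :=
      congrArg Subtype.val h
    have h2 := hW2 _ (hcancel _ _ h0)
    funext j
    have h3 : (d j : ℤ) ∣ ((c j).val : ℤ) - ((c' j).val : ℤ) := by simpa using h2 j
    have h4 : ((((c j).val : ℤ) - ((c' j).val : ℤ) : ℤ) : ZMod (d j)) = 0 :=
      (ZMod.intCast_zmod_eq_zero_iff_dvd _ _).2 h3
    rw [Int.cast_sub, sub_eq_zero] at h4
    calc c j = (((c j).val : ℤ) : ZMod (d j)) := (hzm_cast j (c j)).symm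
      _ = (((c' j).val : ℤ) : ZMod (d j)) := h4
      _ = c' j := hzm_cast j (c' j)
  have hsurj : Function.Surjective ψ := by
    rintro ⟨u, hu⟩
    rw [hSdef, Subgroup.mem_inf] at hu
    obtain ⟨huA, huB⟩ := hu
    obtain ⟨ta, htaA, htaE⟩ := (mem_expT _ _).1 huA
    obtain ⟨tb, htbB, htbE⟩ := (mem_expT _ _).1 huB
    have harg0 : ta - tb + tb = ta := by abel
    have h1 : E n (ta - tb) * E n tb = E n ta := by
      rw [← E_add, harg0]
    have h2 : E n (ta - tb) = 1 := by
      rw [htaE, htbE] at h1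
      exact mul_eq_right.1 h1
    obtain ⟨m, hm⟩ := (E_eq_one_iff _).1 h2
    have hVB : tb ∈ Submodule.span ℂ (Set.range fun j => zc (βv j)) := by
      refine Submodule.span_le.2 ?_ htbB
      rintro _ ⟨y, hy, rfl⟩
      obtain ⟨c, hc⟩ := hBcoords y hy
      rw [hc, zc_sum]
      exact Submodule.sum_mem _ fun j _ =>
        Submodule.smul_mem _ _ (Submodule.subset_span ⟨j, rfl⟩)
    obtain ⟨t, ht⟩ := (Submodule.mem_span_range_iff_exists_fun ℂ).1 hVB
    set e : Fin b → ℤ := fun j => -(g.repr m (J j)) with hedef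
    have htcoef : ∀ j, t j * (d j : ℂ) = (e j : ℂ) := by
      intro j
      have h3 : cb.repr (zc m) (J j) = cb.repr ta (J j) - cb.repr tb (J j) := by
        rw [← hm, map_sub, Finsupp.sub_apply]
      rw [hrepr_int] at h3
      have h4 : cb.repr ta (J j) = 0 := hcoordA ta htaA _
      have h5 : cb.repr tb (J j) = t j * d j := by
        rw [← ht]
        exact hcoordβ t j
      rw [h4, h5, zero_sub] at h3
      have h6 : t j * (d j : ℂ) = -((g.repr m (J j) : ℤ) : ℂ) :=
        neg_eq_iff_eq_neg.1 h3.symm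
      rw [hedef]
      push_cast
      exact h6
    have htb : tb = te e := by
      rw [← ht]
      simp only [htedef]
      refine Finset.sum_congr rfl fun j _ => ?_
      congr 1
      rw [eq_div_iff (hdC j)]
      exact htcoef j
    refine ⟨fun j => ((e j : ℤ) : ZMod (d j)), ?_⟩
    apply Subtype.ext
    show w (fun j => ((((e j : ℤ) : ZMod (d j))).val : ℤ)) = u
    set cv : Fin b → ℤ := fun j => ((((e j : ℤ) : ZMod (d j))).val : ℤ) with hcvdef
    have hdvd : ∀ j, (d j : ℤ) ∣ cv j - e j := by
      intro j
      rw [← ZMod.intCast_zmod_eq_zero_iff_dvd, Int.cast_sub, sub_eq_zero]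
      simp only [hcvdef]
      exact hzm_cast j ((e j : ZMod (d j)))
    have hw1 : w (cv - e) = 1 := hW1 _ (fun j => by simpa using hdvd j)
    have harg : cv - e + e = cv := by abel
    have h7 : w cv = w e := by
      have h8 : w (cv - e) * w e = w cv := by rw [← hw_add, harg]
      rw [hw1, one_mul] at h8
      exact h8.symm
    have h9 : w e = u := by
      have hwe : w e = E n (te e) := rfl
      rw [hwe, ← htb, htbE]
    exact h7.trans h9
  have hc1 : Nat.card (∀ j, ZMod (d j)) = Nat.card S :=
    Nat.card_eq_of_bijective ψ ⟨hinj, hsurj⟩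
  rw [← hc1, Nat.card_pi]
  exact Finset.prod_congr rfl fun j _ => Nat.card_zmod (d j)
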